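/- arXiv:2106.09363 — 2 statements merged into one kernel-verified Lean document; each statement's English description precedes it below -/
import Mathlib

section
/- Let x_1, …, x_n and x̃_1, …, x̃_n be points in ℝ^d with [x̃_1 … x̃_n] of full rank d, let π* be a permutation of {1,…,n} and R* a d×d orthogonal matrix with sqrt(Σ_{i=1}^n ‖x_i − R* x̃_{π*(i)}‖_2²) ≤ ε. Let j_1, …, j_d be d indices maximizing the absolute value of the determinant of [x̃_{j_1} … x̃_{j_d}], define i_1,…,i_d by π*(i_k) = j_k, and let R be a d×d orthogonal matrix minimizing Σ_{k=1}^d ‖x_{i_k} − R x̃_{j_k}‖_2² over all orthogonal matrices. Then for every k ∉ {i_1,…,i_d}, ‖x_k − R x̃_{π*(k)}‖_2 ≤ √(1 + 4d) · ε. -/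
open scoped BigOperators Matrix

/-- Euclidean norm on `ℝ^d`. -/
noncomputable def vnorm {d : ℕ} (v : Fin d → ℝ) : ℝ :=
  Real.sqrt (∑ a, (v a) ^ 2)

/-- The matrix with columns `y (j 0), …, y (j (d-1))`. -/
noncomputable def colMatrix {n d : ℕ} (y : Fin n → Fin d → ℝ) (j : Fin d → Fin n) :
    Matrix (Fin d) (Fin d) ℝ :=
  Matrix.of fun a b => y (j b) a

lemma vnorm_eq_norm {d : ℕ} (v : Fin d → ℝ) :
    vnorm v = ‖(WithLp.equiv 2 (Fin d → ℝ)).symm v‖ := by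
  rw [EuclideanSpace.norm_eq]
  simp [vnorm, sq_abs]

lemma vnorm_nonneg {d : ℕ} (v : Fin d → ℝ) : 0 ≤ vnorm v := Real.sqrt_nonneg _

lemma vnorm_add_le {d : ℕ} (u v : Fin d → ℝ) : vnorm (u + v) ≤ vnorm u + vnorm v := by
  simp only [vnorm_eq_norm]
  exact norm_add_le ((WithLp.equiv 2 (Fin d → ℝ)).symm u) ((WithLp.equiv 2 (Fin d → ℝ)).symm v)

lemma vnorm_smul {d : ℕ} (c : ℝ) (u : Fin d → ℝ) : vnorm (c • u) = |c| * vnorm u := by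
  simp only [vnorm_eq_norm]
  rw [show (WithLp.equiv 2 (Fin d → ℝ)).symm (c • u)
      = c • (WithLp.equiv 2 (Fin d → ℝ)).symm u from rfl, norm_smul, Real.norm_eq_abs]

lemma vnorm_zero {d : ℕ} : vnorm (0 : Fin d → ℝ) = 0 := by simp [vnorm]

lemma vnorm_sub_rev {d : ℕ} (u v : Fin d → ℝ) : vnorm (u - v) = vnorm (v - u) := by
  unfold vnorm
  congr 1
  apply Finset.sum_congr rfl; intro a _
  simp [Pi.sub_apply]; ring

lemma vnorm_sum_le {d : ℕ} {ι : Type*} (s : Finset ι) (f : ι → Fin d → ℝ) :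
    vnorm (∑ a ∈ s, f a) ≤ ∑ a ∈ s, vnorm (f a) := by
  classical
  induction s using Finset.cons_induction with
  | empty => simp [vnorm_zero]
  | cons a s ha ih =>
    rw [Finset.sum_cons, Finset.sum_cons]
    exact le_trans (vnorm_add_le _ _) (add_le_add le_rfl ih)

lemma exists_det_ne_zero {n d : ℕ} (xt : Fin n → Fin d → ℝ)
    (hrank : (Matrix.of fun (a : Fin d) (b : Fin n) => xt b a).rank = d) :
    ∃ j' : Fin d → Fin n, (colMatrix xt j').det ≠ 0 := by
  classical
  have hspan : Submodule.span ℝ (Set.range xt) = ⊤ := by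
    apply Submodule.eq_top_of_finrank_eq
    have h1 : (Matrix.of fun (a : Fin d) (b : Fin n) => xt b a).rank
        = Module.finrank ℝ (Submodule.span ℝ (Set.range xt)) := by
      rw [Matrix.rank_eq_finrank_span_cols]
      have : Matrix.transpose (Matrix.of fun (a : Fin d) (b : Fin n) => xt b a) = xt := rfl
      rfl
    rw [← h1, hrank, Module.finrank_fin_fun]
  obtain ⟨s, hs_sub, hs_span, hs_li⟩ := exists_linearIndependent ℝ (Set.range xt)
  have hs_fin : s.Finite := (Set.finite_range xt).subset hs_sub
  haveI := hs_fin.fintype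
  have hcard : Fintype.card s = d := by
    have h2 := finrank_span_set_eq_card hs_li
    rw [hs_span, hspan, finrank_top, Module.finrank_fin_fun, Set.toFinset_card] at h2
    omega
  let e : Fin d ≃ s := (Fintype.equivFinOfCardEq hcard).symm
  choose j' hj' using fun a => hs_sub (e a).2
  refine ⟨j', ?_⟩
  have hli : LinearIndependent ℝ (fun a : Fin d => xt (j' a)) := by
    have := hs_li.comp e e.injective
    rw [show (fun a : Fin d => xt (j' a)) = Subtype.val ∘ e from funext hj']
    exact this
  have hu : IsUnit (colMatrix xt j') := Matrix.linearIndependent_cols_iff_isUnit.mp hli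
  exact ((Matrix.isUnit_iff_isUnit_det _).mp hu).ne_zero

set_option maxHeartbeats 1000000 in
theorem stmt3 {n d : ℕ} (x xt : Fin n → Fin d → ℝ) (ε : ℝ)
    (hrank : (Matrix.of fun (a : Fin d) (b : Fin n) => xt b a).rank = d)
    (σs : Equiv.Perm (Fin n)) (Rs : Matrix (Fin d) (Fin d) ℝ) (hRs : Rsᵀ * Rs = 1)
    (hopt : Real.sqrt (∑ i, (vnorm (x i - Rs.mulVec (xt (σs i)))) ^ 2) ≤ ε)
    (j : Fin d → Fin n)
    (hj : ∀ j' : Fin d → Fin n, |(colMatrix xt j').det| ≤ |(colMatrix xt j).det|)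
    (i : Fin d → Fin n) (hi : ∀ k : Fin d, σs (i k) = j k)
    (R : Matrix (Fin d) (Fin d) ℝ) (hR : Rᵀ * R = 1)
    (hRmin : ∀ R' : Matrix (Fin d) (Fin d) ℝ, R'ᵀ * R' = 1 →
      ∑ k : Fin d, (vnorm (x (i k) - R.mulVec (xt (j k)))) ^ 2 ≤
        ∑ k : Fin d, (vnorm (x (i k) - R'.mulVec (xt (j k)))) ^ 2) :
    ∀ k : Fin n, (∀ a : Fin d, k ≠ i a) →
      vnorm (x k - R.mulVec (xt (σs k))) ≤ Real.sqrt (1 + 4 * d) * ε := by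
  classical
  intro k hk
  have hε : 0 ≤ ε := le_trans (Real.sqrt_nonneg _) hopt
  -- abbreviations
  set M : Matrix (Fin d) (Fin d) ℝ := colMatrix xt j with hMdef
  -- determinant of M is nonzero
  obtain ⟨j₀, hj₀⟩ := exists_det_ne_zero xt hrank
  have hMdet : M.det ≠ 0 := by
    intro h0
    have h2 := hj j₀
    rw [h0, abs_zero] at h2
    exact hj₀ (abs_eq_zero.mp (le_antisymm h2 (abs_nonneg _)))
  -- j and i are injective
  have hjinj : Function.Injective j := by
    intro a b hab
    by_contra hne
    exact hMdet (Matrix.det_zero_of_column_eq hne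
      (fun r => by simp only [hMdef, colMatrix, Matrix.of_apply, hab]))
  have hiinj : Function.Injective i := fun a b hab =>
    hjinj (by rw [← hi a, ← hi b, hab])
  -- error quantities
  have hε2 : ∑ m, (vnorm (x m - Rs.mulVec (xt (σs m)))) ^ 2 ≤ ε ^ 2 := by
    have h1 := pow_le_pow_left₀ (Real.sqrt_nonneg _) hopt 2
    rwa [Real.sq_sqrt (Finset.sum_nonneg fun m _ => sq_nonneg _)] at h1
  have hkey : (vnorm (x k - Rs.mulVec (xt (σs k)))) ^ 2
      + ∑ a, (vnorm (x (i a) - Rs.mulVec (xt (j a)))) ^ 2 ≤ ε ^ 2 := by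
    have hknotin : k ∉ Finset.image i Finset.univ := by
      simp only [Finset.mem_image, Finset.mem_univ, true_and]
      rintro ⟨a, ha⟩
      exact hk a ha.symm
    calc (vnorm (x k - Rs.mulVec (xt (σs k)))) ^ 2
        + ∑ a, (vnorm (x (i a) - Rs.mulVec (xt (j a)))) ^ 2
        = ∑ m ∈ insert k (Finset.image i Finset.univ),
            (vnorm (x m - Rs.mulVec (xt (σs m)))) ^ 2 := by
          rw [Finset.sum_insert hknotin,
            Finset.sum_image (fun a _ b _ h => hiinj h)]
          congr 1
          exact Finset.sum_congr rfl fun a _ => by rw [hi a]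
      _ ≤ ∑ m, (vnorm (x m - Rs.mulVec (xt (σs m)))) ^ 2 :=
          Finset.sum_le_sum_of_subset_of_nonneg (Finset.subset_univ _)
            (fun m _ _ => sq_nonneg _)
      _ ≤ ε ^ 2 := hε2
  have hf_le : ∑ a, (vnorm (x (i a) - R.mulVec (xt (j a)))) ^ 2
      ≤ ∑ a, (vnorm (x (i a) - Rs.mulVec (xt (j a)))) ^ 2 := hRmin Rs hRs
  -- Cramer coefficients
  set v : Fin d → ℝ := xt (σs k) with hvdef
  set c : Fin d → ℝ := (M.det)⁻¹ • Matrix.cramer M v with hcdef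
  have hMc : M.mulVec c = v := by
    rw [hcdef, Matrix.mulVec_smul, Matrix.mulVec_cramer, smul_smul,
      inv_mul_cancel₀ hMdet, one_smul]
  have hcb : ∀ a, |c a| ≤ 1 := by
    intro a
    have h1 : c a = (M.det)⁻¹ * (M.updateCol a v).det := by
      simp [hcdef, Matrix.cramer_apply]
    have h2 : M.updateCol a v = colMatrix xt (Function.update j a (σs k)) := by
      ext r b
      by_cases hb : b = a
      · simp [Matrix.updateCol_apply, hb, colMatrix, Function.update, hvdef]
      · simp only [Matrix.updateCol_apply, hb, if_false, colMatrix, Matrix.of_apply,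
          Function.update, hMdef]
        simp [hb]
    have h3 : |(M.updateCol a v).det| ≤ |M.det| := by rw [h2]; exact hj _
    rw [h1, abs_mul, abs_inv]
    calc |M.det|⁻¹ * |(M.updateCol a v).det| ≤ |M.det|⁻¹ * |M.det| :=
          mul_le_mul_of_nonneg_left h3 (inv_nonneg.mpr (abs_nonneg _))
      _ = 1 := inv_mul_cancel₀ (abs_ne_zero.mpr hMdet)
  -- decomposition of v
  have hvdec : v = ∑ a, c a • xt (j a) := by
    funext r
    have h1 := congrFun hMc r
    rw [← h1]
    simp only [Matrix.mulVec, dotProduct, Finset.sum_apply, Pi.smul_apply,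
      smul_eq_mul]
    exact Finset.sum_congr rfl fun a _ => by
      show M r a * c a = c a * xt (j a) r
      rw [hMdef]; simp [colMatrix]; ring
  have hmul : ∀ Q : Matrix (Fin d) (Fin d) ℝ,
      Q.mulVec v = ∑ a, c a • Q.mulVec (xt (j a)) := by
    intro Q
    calc Q.mulVec v = Q.mulVecLin (∑ a, c a • xt (j a)) := by rw [← hvdec]; rfl
      _ = ∑ a, c a • Q.mulVec (xt (j a)) := by
          rw [map_sum]
          exact Finset.sum_congr rfl fun a _ => by rw [map_smul]; rfl
  have hdecomp : x k - R.mulVec v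
      = (x k - Rs.mulVec v)
        + ∑ a, c a • (Rs.mulVec (xt (j a)) - R.mulVec (xt (j a))) := by
    have h1 : ∑ a, c a • (Rs.mulVec (xt (j a)) - R.mulVec (xt (j a)))
        = Rs.mulVec v - R.mulVec v := by
      rw [hmul Rs, hmul R, ← Finset.sum_sub_distrib]
      exact Finset.sum_congr rfl fun a _ => (smul_sub _ _ _)
    rw [h1]; abel
  -- scalar quantities
  set A : ℝ := vnorm (x k - Rs.mulVec (xt (σs k))) with hAdef
  set S : ℝ := Real.sqrt (∑ a, (vnorm (x (i a) - Rs.mulVec (xt (j a)))) ^ 2) with hSdef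
  have hS0 : 0 ≤ S := Real.sqrt_nonneg _
  have hS2 : S ^ 2 = ∑ a, (vnorm (x (i a) - Rs.mulVec (xt (j a)))) ^ 2 :=
    Real.sq_sqrt (Finset.sum_nonneg fun a _ => sq_nonneg _)
  -- the norm bound
  have hnorm : vnorm (x k - R.mulVec v)
      ≤ A + ∑ a, (vnorm (x (i a) - Rs.mulVec (xt (j a)))
          + vnorm (x (i a) - R.mulVec (xt (j a)))) := by
    rw [hdecomp]
    refine le_trans (vnorm_add_le _ _) (add_le_add le_rfl ?_)
    refine le_trans (vnorm_sum_le _ _) (Finset.sum_le_sum fun a _ => ?_)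
    rw [vnorm_smul]
    have h1 : vnorm (Rs.mulVec (xt (j a)) - R.mulVec (xt (j a)))
        ≤ vnorm (x (i a) - Rs.mulVec (xt (j a)))
          + vnorm (x (i a) - R.mulVec (xt (j a))) := by
      have h2 : Rs.mulVec (xt (j a)) - R.mulVec (xt (j a))
          = (Rs.mulVec (xt (j a)) - x (i a)) + (x (i a) - R.mulVec (xt (j a))) := by abel
      rw [h2]
      refine le_trans (vnorm_add_le _ _) ?_
      rw [vnorm_sub_rev]
    calc |c a| * vnorm (Rs.mulVec (xt (j a)) - R.mulVec (xt (j a)))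
        ≤ 1 * (vnorm (x (i a) - Rs.mulVec (xt (j a)))
            + vnorm (x (i a) - R.mulVec (xt (j a)))) :=
          mul_le_mul (hcb a) h1 (vnorm_nonneg _)
            zero_le_one
      _ = _ := one_mul _
  -- Cauchy-Schwarz for the sums
  have hCS : ∀ q : Fin d → ℝ, (∀ a, 0 ≤ q a) →
      ∑ a, q a ^ 2 ≤ ∑ a, (vnorm (x (i a) - Rs.mulVec (xt (j a)))) ^ 2 →
      ∑ a, q a ≤ Real.sqrt d * S := by
    intro q hq hqs
    have h1 : (∑ a, q a) ^ 2 ≤ (d : ℝ) * ∑ a, q a ^ 2 := by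
      have := sq_sum_le_card_mul_sum_sq (s := (Finset.univ : Finset (Fin d))) (f := q)
      simpa using this
    have h2 : (∑ a, q a) ^ 2 ≤ (d : ℝ) * S ^ 2 := by
      rw [hS2]
      exact le_trans h1 (mul_le_mul_of_nonneg_left hqs (Nat.cast_nonneg d))
    have h3 : ∑ a, q a = Real.sqrt ((∑ a, q a) ^ 2) :=
      (Real.sqrt_sq (Finset.sum_nonneg fun a _ => hq a)).symm
    rw [h3]
    calc Real.sqrt ((∑ a, q a) ^ 2) ≤ Real.sqrt ((d : ℝ) * S ^ 2) := Real.sqrt_le_sqrt h2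
      _ = Real.sqrt d * S := by
          rw [Real.sqrt_mul (Nat.cast_nonneg d), Real.sqrt_sq hS0]
  have he_sum : ∑ a, vnorm (x (i a) - Rs.mulVec (xt (j a))) ≤ Real.sqrt d * S :=
    hCS (fun a => vnorm (x (i a) - Rs.mulVec (xt (j a)))) (fun a => vnorm_nonneg _) le_rfl
  have hf_sum : ∑ a, vnorm (x (i a) - R.mulVec (xt (j a))) ≤ Real.sqrt d * S :=
    hCS (fun a => vnorm (x (i a) - R.mulVec (xt (j a)))) (fun a => vnorm_nonneg _) hf_le
  -- final arithmetic
  have hA0 : 0 ≤ A := vnorm_nonneg _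
  have hAS : A ^ 2 + S ^ 2 ≤ ε ^ 2 := by rw [hS2]; exact hkey
  have hD2 : (Real.sqrt d) ^ 2 = (d : ℝ) := Real.sq_sqrt (Nat.cast_nonneg d)
  have hD0 : 0 ≤ Real.sqrt d := Real.sqrt_nonneg _
  clear_value A S
  have hfinal : A + 2 * (Real.sqrt d * S) ≤ Real.sqrt (1 + 4 * d) * ε := by
    have hlhs0 : 0 ≤ A + 2 * (Real.sqrt d * S) :=
      add_nonneg hA0 (mul_nonneg (by norm_num) (mul_nonneg hD0 hS0))
    have h1 : (A + 2 * (Real.sqrt d * S)) ^ 2 ≤ (1 + 4 * d) * ε ^ 2 := by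
      nlinarith [sq_nonneg (S - 2 * Real.sqrt d * A), sq_nonneg A, sq_nonneg S, hD2,
        mul_nonneg hD0 hS0, mul_nonneg hA0 hS0, hAS]
    have h2 : Real.sqrt ((A + 2 * (Real.sqrt d * S)) ^ 2)
        ≤ Real.sqrt ((1 + 4 * d) * ε ^ 2) := Real.sqrt_le_sqrt h1
    rwa [Real.sqrt_sq hlhs0, Real.sqrt_mul (by positivity), Real.sqrt_sq hε] at h2
  calc vnorm (x k - R.mulVec (xt (σs k)))
      ≤ A + ∑ a, (vnorm (x (i a) - Rs.mulVec (xt (j a)))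
          + vnorm (x (i a) - R.mulVec (xt (j a)))) := hnorm
    _ = A + (∑ a, vnorm (x (i a) - Rs.mulVec (xt (j a)))
          + ∑ a, vnorm (x (i a) - R.mulVec (xt (j a)))) := by rw [Finset.sum_add_distrib]
    _ ≤ A + (Real.sqrt d * S + Real.sqrt d * S) := by
        exact add_le_add le_rfl (add_le_add he_sum hf_sum)
    _ = A + 2 * (Real.sqrt d * S) := by ring
    _ ≤ Real.sqrt (1 + 4 * d) * ε := hfinal
end

section
/- Let A be a nonsingular d×d real matrix (d ≥ 2) with ‖A − A(d) A(d)⁺ A‖_F ≤ √d · σ_d(A), where A(d) is A with its d-th column removed. Let U be a d×d orthogonal matrix and set δ(U) = U A(d) − A(d) and c = A_{*,d} − A(d) A(d)⁺ A_{*,d}. Then at least one of the following holds: ‖U c − c‖_2 ≤ √(2d) · ‖δ(U)‖_F, or ‖U c + c‖_2 ≤ √(2d) · ‖δ(U)‖_F. -/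
open scoped BigOperators Matrix

/-- Frobenius norm of a real matrix. -/
noncomputable def frob {m n : Type*} [Fintype m] [Fintype n] (M : Matrix m n ℝ) : ℝ :=
  Real.sqrt (∑ i, ∑ j, (M i j) ^ 2)

/-- `A` with its `k`-th column removed; the remaining columns are indexed by `{j // j ≠ k}`. -/
def colDel {d : ℕ} (A : Matrix (Fin d) (Fin d) ℝ) (k : Fin d) :
    Matrix (Fin d) {j : Fin d // j ≠ k} ℝ :=
  Matrix.of fun i j => A i j.1

/-- `P` is the Moore–Penrose pseudo-inverse of `M` (the four Penrose conditions). -/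
def IsMPInv {m n : Type*} [Fintype m] [Fintype n]
    (M : Matrix m n ℝ) (P : Matrix n m ℝ) : Prop :=
  M * P * M = M ∧ P * M * P = P ∧ (M * P)ᵀ = M * P ∧ (P * M)ᵀ = P * M

/-- The smallest singular value of a square matrix, as the infimum of `‖A v‖` over
unit vectors `v`. -/
noncomputable def sigmaMin {d : ℕ} (A : Matrix (Fin d) (Fin d) ℝ) : ℝ :=
  sInf {r : ℝ | ∃ v : Fin d → ℝ, vnorm v = 1 ∧ r = vnorm (A.mulVec v)}

open Matrix
lemma dot_self_eq {n : Type*} [Fintype n] (v : n → ℝ) : v ⬝ᵥ v = ∑ a, v a ^ 2 := by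
  simp [dotProduct, sq]

lemma dotself_zero {n : Type*} [Fintype n] {v : n → ℝ} (h : ∑ a, v a ^ 2 = 0) : v = 0 := by
  funext i
  have := (Finset.sum_eq_zero_iff_of_nonneg (fun i _ => sq_nonneg (v i))).mp h i (Finset.mem_univ i)
  exact pow_eq_zero_iff two_ne_zero |>.mp this

lemma cs_sum {n : Type*} [Fintype n] (v w : n → ℝ) :
    (∑ i, v i * w i)^2 ≤ (∑ i, v i ^2) * (∑ i, w i ^2) :=
  Finset.sum_mul_sq_le_sq_mul_sq Finset.univ v w

lemma cs_dot {n : Type*} [Fintype n] (v w : n → ℝ) :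
    (v ⬝ᵥ w)^2 ≤ (∑ i, v i ^2) * (∑ i, w i ^2) := cs_sum v w

lemma mulVec_sq_le {m n : Type*} [Fintype m] [Fintype n] (M : Matrix m n ℝ) (x : n → ℝ) :
    ∑ i, ((M *ᵥ x) i)^2 ≤ (∑ i, ∑ j, M i j ^2) * (∑ j, x j ^2) := by
  rw [Finset.sum_mul]
  apply Finset.sum_le_sum
  intro i _
  exact cs_sum (fun j => M i j) x

lemma signfact {γ q s : ℝ} (h : q + s^2*γ = γ) (hq : 0 ≤ q) (hγ : 0 ≤ γ) (hs : 0 ≤ s) :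
    2*γ - 2*(s*γ) ≤ 2*q := by
  nlinarith [mul_nonneg hs hq, mul_nonneg hs hγ, mul_nonneg (mul_nonneg hs hs) hγ]

lemma sum_split {d : ℕ} (k : Fin d) (f : Fin d → ℝ) :
    ∑ j, f j = f k + ∑ j : {j : Fin d // j ≠ k}, f j.1 := by
  rw [Fintype.sum_eq_add_sum_compl k f]
  congr 1
  exact Finset.sum_subtype (p := fun j => j ≠ k) {k}ᶜ (fun x => by simp) f

lemma mulVec_split {d : ℕ} (A : Matrix (Fin d) (Fin d) ℝ) (k : Fin d) (w : Fin d → ℝ) :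
    A *ᵥ w = w k • (fun i => A i k) + colDel A k *ᵥ (fun j => w j.1) := by
  funext i
  simp only [Matrix.mulVec, dotProduct, Pi.add_apply, Pi.smul_apply, smul_eq_mul,
    colDel, Matrix.of_apply]
  rw [sum_split k]
  ring


set_option maxHeartbeats 1000000 in
theorem stmt8 {d : ℕ} (hd : 2 ≤ d) (A : Matrix (Fin d) (Fin d) ℝ) (hA : A.det ≠ 0)
    (k : Fin d) (hk : (k : ℕ) = d - 1)
    (P : Matrix {j : Fin d // j ≠ k} (Fin d) ℝ) (hP : IsMPInv (colDel A k) P)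
    (hbound : frob (A - colDel A k * P * A) ≤ Real.sqrt d * sigmaMin A)
    (U : Matrix (Fin d) (Fin d) ℝ) (hU : Uᵀ * U = 1)
    (c : Fin d → ℝ)
    (hc : c = (fun i => A i k) - (colDel A k * P).mulVec (fun i => A i k)) :
    vnorm (U.mulVec c - c) ≤
        Real.sqrt (2 * d) * frob (U * colDel A k - colDel A k) ∨
    vnorm (U.mulVec c + c) ≤
        Real.sqrt (2 * d) * frob (U * colDel A k - colDel A k) := by
  classical
  obtain ⟨h1, h2, h3, h4⟩ := hP
  set B := colDel A k with hB
  set Q := B * P with hQdef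
  set a : Fin d → ℝ := fun i => A i k with ha
  set σ := sigmaMin A with hσdef
  clear_value a
  clear_value Q
  clear_value B
  clear_value σ
  -- basic algebra
  have hQB : Q * B = B := h1
  have hQQ : Q * Q = Q := by
    rw [hQdef, Matrix.mul_assoc B P (B * P), ← Matrix.mul_assoc P B P, h2]
  have hQT : Qᵀ = Q := h3
  have hBTQ : Bᵀ * Q = Bᵀ := by
    calc Bᵀ * Q = Bᵀ * Qᵀ := by rw [hQT]
    _ = (Q * B)ᵀ := by rw [← Matrix.transpose_mul]
    _ = Bᵀ := by rw [hQB]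
  have hcQ : c = a - Q *ᵥ a := hc
  have hQc : Q *ᵥ c = 0 := by
    rw [hcQ, Matrix.mulVec_sub, Matrix.mulVec_mulVec, hQQ, sub_self]
  have hBTc : Bᵀ *ᵥ c = 0 := by
    rw [hcQ, Matrix.mulVec_sub, Matrix.mulVec_mulVec, hBTQ, sub_self]
  have hdotB : ∀ (v : Fin d → ℝ) (w : {j : Fin d // j ≠ k} → ℝ),
      v ⬝ᵥ (B *ᵥ w) = (Bᵀ *ᵥ v) ⬝ᵥ w := by
    intro v w
    rw [Matrix.dotProduct_mulVec, Matrix.mulVec_transpose]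
  have hcperp : ∀ w : {j : Fin d // j ≠ k} → ℝ, c ⬝ᵥ (B *ᵥ w) = 0 := by
    intro w; rw [hdotB, hBTc, zero_dotProduct]
  have hUpres : ∀ x y : Fin d → ℝ, (U *ᵥ x) ⬝ᵥ (U *ᵥ y) = x ⬝ᵥ y := by
    intro x y
    rw [Matrix.dotProduct_mulVec, Matrix.vecMul_mulVec, hU, Matrix.vecMul_one]
  have hQsym : ∀ x y : Fin d → ℝ, (Q *ᵥ x) ⬝ᵥ y = x ⬝ᵥ (Q *ᵥ y) := by
    intro x y
    rw [Matrix.dotProduct_mulVec]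
    congr 1
    rw [← Matrix.mulVec_transpose, hQT]
  
  -- any vector orthogonal to the columns of B is a multiple of c
  have hspan : ∀ v : Fin d → ℝ, Bᵀ *ᵥ v = 0 → ∃ s : ℝ, v = s • c := by
    intro v hv
    have hAinv : A * A⁻¹ = 1 := Matrix.mul_nonsing_inv A (isUnit_iff_ne_zero.mpr hA)
    set z : Fin d → ℝ := A⁻¹ *ᵥ v with hz
    have hv' : A *ᵥ z = v := by
      rw [hz, Matrix.mulVec_mulVec, hAinv, Matrix.one_mulVec]
    refine ⟨z k, ?_⟩
    have hsplit : v = z k • a + B *ᵥ (fun j => z j.1) := by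
      rw [← hv', mulVec_split A k z, ← ha, ← hB]
    have hkey : v - z k • c = B *ᵥ ((fun j => z j.1) + z k • (P *ᵥ a)) := by
      rw [Matrix.mulVec_add, Matrix.mulVec_smul, Matrix.mulVec_mulVec]
      have : a - c = Q *ᵥ a := by rw [hcQ, sub_sub_cancel]
      rw [hsplit]
      funext i
      simp only [Pi.add_apply, Pi.sub_apply, Pi.smul_apply, smul_eq_mul]
      have h' := congrFun this i
      simp only [Pi.sub_apply] at h'
      have hq : (Q *ᵥ a) i = ((B * P) *ᵥ a) i := by rw [← hQdef]
      rw [hq] at h'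
      linear_combination z k * h'
    have hBTvc : Bᵀ *ᵥ (v - z k • c) = 0 := by
      rw [Matrix.mulVec_sub, hv, Matrix.mulVec_smul, hBTc, smul_zero, sub_self]
    have hzero : (v - z k • c) ⬝ᵥ (v - z k • c) = 0 := by
      rw [hkey] at hBTvc ⊢
      rw [hdotB, hBTvc, zero_dotProduct]
    have : v - z k • c = 0 := by
      apply dotself_zero
      rw [← dot_self_eq]
      exact hzero
    have := sub_eq_zero.mp this
    exact this
  -- sigma facts
  have hσbdd : BddBelow {r : ℝ | ∃ v : Fin d → ℝ, vnorm v = 1 ∧ r = vnorm (A.mulVec v)} := by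
    refine ⟨0, ?_⟩
    rintro r ⟨v, -, rfl⟩
    exact Real.sqrt_nonneg _
  have hσ0 : 0 ≤ σ := by
    rw [hσdef, sigmaMin]
    apply Real.sInf_nonneg
    rintro r ⟨v, -, rfl⟩
    exact Real.sqrt_nonneg _
  have hσle : ∀ v : Fin d → ℝ, vnorm v = 1 → σ ≤ vnorm (A *ᵥ v) := by
    intro v hv
    rw [hσdef, sigmaMin]
    exact csInf_le hσbdd ⟨v, hv, rfl⟩
  -- the residual matrix has a single nonzero column, equal to c
  have hentry : ∀ i j, (A - Q * A) i j = if j = k then c i else 0 := by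
    intro i j
    by_cases hj : j = k
    · subst hj
      simp only [Matrix.sub_apply, if_pos rfl]
      have hqa : (Q * A) i j = (Q *ᵥ a) i := by
        simp [Matrix.mul_apply, Matrix.mulVec, dotProduct, ha]
      rw [hqa, hcQ]
      simp [ha]
    · simp only [Matrix.sub_apply, if_neg hj]
      have h := congrFun (congrFun hQB i) ⟨j, hj⟩
      simp only [Matrix.mul_apply, hB, colDel, Matrix.of_apply] at h
      simp only [Matrix.mul_apply]
      rw [h]
      ring
  have hfrob : frob (A - Q * A) = vnorm c := by
    rw [frob, vnorm]
    congr 1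
    apply Finset.sum_congr rfl
    intro i _
    have : ∀ j, ((A - Q * A) i j)^2 = if j = k then c i ^2 else 0 := by
      intro j; rw [hentry i j]; split <;> simp
    simp only [this]
    simp
  set γ : ℝ := ∑ i, c i ^ 2 with hγdef
  clear_value γ
  have hγ0 : 0 ≤ γ := by
    rw [hγdef]
    exact Finset.sum_nonneg fun i _ => sq_nonneg _
  have hγσ : γ ≤ d * σ ^ 2 := by
    rw [hfrob] at hbound
    have hvc : vnorm c = Real.sqrt γ := by rw [vnorm, ← hγdef]
    rw [hvc] at hbound
    have h0 : (0:ℝ) ≤ Real.sqrt d * σ := le_trans (Real.sqrt_nonneg γ) hbound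
    have := pow_le_pow_left₀ (Real.sqrt_nonneg γ) hbound 2
    rw [Real.sq_sqrt hγ0, mul_pow, Real.sq_sqrt (by positivity : (0:ℝ) ≤ (d:ℝ))] at this
    exact this
  -- decompose u = U c
  set u : Fin d → ℝ := U *ᵥ c with hu
  clear_value u
  have hBTu : Bᵀ *ᵥ (u - Q *ᵥ u) = 0 := by
    rw [Matrix.mulVec_sub, Matrix.mulVec_mulVec, hBTQ, sub_self]
  obtain ⟨s, hs⟩ := hspan (u - Q *ᵥ u) hBTu
  have hudecomp : u = Q *ᵥ u + s • c := by rw [← hs]; abel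
  set q : ℝ := (Q *ᵥ u) ⬝ᵥ (Q *ᵥ u) with hqdef
  clear_value q
  have hq0 : 0 ≤ q := by rw [hqdef, dot_self_eq]; positivity
  have hQuc : (Q *ᵥ u) ⬝ᵥ c = 0 := by rw [hQsym, hQc, dotProduct_zero]
  have hcQu : c ⬝ᵥ (Q *ᵥ u) = 0 := by rw [dotProduct_comm]; exact hQuc
  have hccγ : c ⬝ᵥ c = γ := by rw [hγdef]; exact dot_self_eq c
  have huu : u ⬝ᵥ u = γ := by rw [hu, hUpres, hccγ]
  have huc : u ⬝ᵥ c = s * γ := by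
    nth_rewrite 1 [hudecomp]
    rw [add_dotProduct, hQuc, smul_dotProduct, hccγ]
    simp
  have hqsγ : q + s ^ 2 * γ = γ := by
    have h := huu
    rw [hudecomp] at h
    simp only [add_dotProduct, dotProduct_add, smul_dotProduct,
      dotProduct_smul, smul_eq_mul, hQuc, hcQu, hccγ] at h
    rw [← hqdef] at h
    linear_combination h
  -- q = -(u, δ y) with y = P u
  set y := P *ᵥ u with hy
  clear_value y
  have hQuBy : Q *ᵥ u = B *ᵥ y := by rw [hy, Matrix.mulVec_mulVec, ← hQdef]
  have hqid : q = u ⬝ᵥ (B *ᵥ y) := by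
    rw [hqdef, hQsym, Matrix.mulVec_mulVec, hQQ, hQuBy]
  have hUBy : u ⬝ᵥ ((U * B) *ᵥ y) = 0 := by
    rw [← Matrix.mulVec_mulVec, hu, hUpres]
    exact hcperp y
  set δ := U * B - B with hδdef
  clear_value δ
  have hδy : δ *ᵥ y = (U * B) *ᵥ y - B *ᵥ y := by rw [hδdef, Matrix.sub_mulVec]
  have hqneg : q = -(u ⬝ᵥ (δ *ᵥ y)) := by
    rw [hδy, dotProduct_sub, hUBy, ← hqid]; ring
  set F := ∑ i, ∑ j, δ i j ^ 2 with hFdef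
  clear_value F
  have hF0 : 0 ≤ F := by rw [hFdef]; positivity
  set Sy := ∑ j, y j ^ 2 with hSydef
  clear_value Sy
  have hSy0 : 0 ≤ Sy := by rw [hSydef]; positivity
  have hq_cs : q ^ 2 ≤ γ * (F * Sy) := by
    have h1 : q ^ 2 = (u ⬝ᵥ (δ *ᵥ y)) ^ 2 := by rw [hqneg]; ring
    have h2 := cs_dot u (δ *ᵥ y)
    have h3 := mulVec_sq_le δ y
    have hsumu : ∑ i, u i ^ 2 = γ := by rw [← dot_self_eq, huu]
    rw [hsumu] at h2
    rw [← hFdef, ← hSydef] at h3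
    calc q ^ 2 = (u ⬝ᵥ (δ *ᵥ y)) ^ 2 := h1
    _ ≤ γ * ∑ i, ((δ *ᵥ y) i) ^ 2 := h2
    _ ≤ γ * (F * Sy) := mul_le_mul_of_nonneg_left h3 hγ0
  -- singular value bound : σ² Sy ≤ q
  have hqB : q = ∑ i, ((B *ᵥ y) i) ^ 2 := by rw [hqdef, hQuBy, dot_self_eq]
  have hσSy : σ ^ 2 * Sy ≤ q := by
    by_cases hy0 : Sy = 0
    · rw [hy0, mul_zero]; exact hq0
    · have hSyp : 0 < Sy := lt_of_le_of_ne hSy0 (Ne.symm hy0)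
      set n := Real.sqrt Sy with hn
      have hnp : 0 < n := Real.sqrt_pos.mpr hSyp
      have hn2 : n ^ 2 = Sy := Real.sq_sqrt hSy0
      set yt : Fin d → ℝ := fun j => if h : j = k then 0 else y ⟨j, h⟩ with hyt
      have hytk : yt k = 0 := by simp [hyt]
      have hytj : (fun j : {j : Fin d // j ≠ k} => yt j.1) = y := by
        funext j
        simp [hyt, j.2]
      have hAyt : A *ᵥ yt = B *ᵥ y := by
        rw [mulVec_split A k yt, hytk, zero_smul, zero_add, hytj, hB]
      have hsyt : ∑ j, yt j ^ 2 = Sy := by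
        rw [hSydef, sum_split k (fun j => yt j ^ 2), hytk]
        simp only [ne_eq, zero_pow, OfNat.ofNat_ne_zero, not_false_eq_true, zero_add]
        apply Finset.sum_congr rfl
        intro j _
        rw [congrFun hytj j]
      have hunit : vnorm (n⁻¹ • yt) = 1 := by
        rw [vnorm]
        have hsum : ∑ i, ((n⁻¹ • yt) i) ^ 2 = n⁻¹ ^ 2 * Sy := by
          rw [← hsyt, Finset.mul_sum]
          apply Finset.sum_congr rfl
          intro i _
          simp [mul_pow]
        rw [hsum, ← hn2]
        rw [show (n⁻¹)^2 * n^2 = 1 by field_simp]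
        exact Real.sqrt_one
      have hσ1 := hσle _ hunit
      have hAv : A *ᵥ (n⁻¹ • yt) = n⁻¹ • (B *ᵥ y) := by
        rw [Matrix.mulVec_smul, hAyt]
      rw [hAv] at hσ1
      have hsum2 : ∑ i, ((n⁻¹ • (B *ᵥ y)) i) ^ 2 = n⁻¹ ^ 2 * q := by
        rw [hqB, Finset.mul_sum]
        apply Finset.sum_congr rfl
        intro i _
        simp [mul_pow]
      rw [vnorm, hsum2, Real.sqrt_mul (sq_nonneg _) q,
        Real.sqrt_sq (inv_nonneg.mpr hnp.le)] at hσ1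
      have hσn : σ * n ≤ Real.sqrt q := by
        have h := mul_le_mul_of_nonneg_right hσ1 hnp.le
        calc σ * n ≤ n⁻¹ * Real.sqrt q * n := h
        _ = Real.sqrt q := by field_simp
      have h2 : (σ * n) ^ 2 ≤ q := by
        have h := pow_le_pow_left₀ (mul_nonneg hσ0 hnp.le) hσn 2
        rwa [Real.sq_sqrt hq0] at h
      calc σ ^ 2 * Sy = (σ * n) ^ 2 := by rw [← hn2]; ring
      _ ≤ q := h2
  -- combine: q ≤ d F
  have hqq : q ^ 2 ≤ (d * F) * q := by
    have e1 : γ * (F * Sy) ≤ (↑d * σ ^ 2) * (F * Sy) :=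
      mul_le_mul_of_nonneg_right hγσ (mul_nonneg hF0 hSy0)
    have e2 : (↑d * F) * (σ ^ 2 * Sy) ≤ (↑d * F) * q :=
      mul_le_mul_of_nonneg_left hσSy (mul_nonneg (Nat.cast_nonneg d) hF0)
    nlinarith [hq_cs, e1, e2]
  have hqdF : q ≤ ↑d * F := by
    rcases eq_or_lt_of_le hq0 with h | h
    · rw [← h]
      positivity
    · have : q * q ≤ (↑d * F) * q := by nlinarith [hqq]
      exact le_of_mul_le_mul_right this h
  -- final case analysis
  have hfδ : frob δ = Real.sqrt F := by rw [frob, ← hFdef]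
  have key : ∀ v : Fin d → ℝ, (∑ i, v i ^ 2) ≤ 2 * ((d : ℝ) * F) →
      vnorm v ≤ Real.sqrt (2 * d) * frob δ := by
    intro v hv
    rw [hfδ, vnorm, ← Real.sqrt_mul (by positivity : (0:ℝ) ≤ 2 * (d:ℝ)) F]
    apply Real.sqrt_le_sqrt
    calc ∑ i, v i ^ 2 ≤ 2 * ((d : ℝ) * F) := hv
    _ = 2 * (d : ℝ) * F := by ring
  by_cases hγz : γ = 0
  · left
    have hc0 : c = 0 := dotself_zero (by rw [← hγdef]; exact hγz)
    have hfn : 0 ≤ Real.sqrt (2 * d) * frob δ := by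
      rw [hfδ]
      positivity
    rw [hu, hc0]
    simp only [Matrix.mulVec_zero, sub_zero, vnorm]
    simpa using hfn
  · have hcu : c ⬝ᵥ u = s * γ := by rw [dotProduct_comm]; exact huc
    have hsub : ∑ i, ((u - c) i) ^ 2 = 2 * γ - 2 * (s * γ) := by
      rw [← dot_self_eq, sub_dotProduct, dotProduct_sub,
        dotProduct_sub, huu, huc, hcu, hccγ]
      ring
    have hadd : ∑ i, ((u + c) i) ^ 2 = 2 * γ + 2 * (s * γ) := by
      rw [← dot_self_eq, add_dotProduct, dotProduct_add,
        dotProduct_add, huu, huc, hcu, hccγ]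
      ring
    rcases le_or_gt 0 s with hs0 | hs0
    · left
      apply key
      have h2q : 2 * γ - 2 * (s * γ) ≤ 2 * q := by
        have := signfact hqsγ hq0 hγ0 hs0
        linarith
      rw [hsub]
      linarith [h2q, hqdF]
    · right
      apply key
      have h2q : 2 * γ + 2 * (s * γ) ≤ 2 * q := by
        have h' : q + (-s)^2*γ = γ := by ring_nf; ring_nf at hqsγ; linarith
        have := signfact h' hq0 hγ0 (neg_nonneg.mpr hs0.le)
        linarith
      rw [hadd]
      linarith [h2q, hqdF]
end
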